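/- (Inequality (2.5) in Lemma 2.6.) Let N be a norm on ℝ². Set L = max{ N(v) : v ∈ ℝ², |v| = 1 } and l = min{ N(v) : v ∈ ℝ², |v| = 1 }, where |·| is the Euclidean norm, and let B = { v ∈ ℝ² : N(v) ≤ 1 } be the unit ball of N with two-dimensional Lebesgue measure |B|. Then (1/2) · L · l ≤ π / |B| ≤ 2 · L · l; equivalently, |B| · L · l ≤ 2π and π ≤ 2 · |B| · L · l. -/

import Mathlib

open MeasureTheory Set
open scoped ENNReal Real Topology

noncomputable section

/-- The plane `ℝ²` as a Euclidean space. -/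
abbrev E2 : Type := EuclideanSpace ℝ (Fin 2)

/-- Any unit vector of `E2` is the first element of some orthonormal basis. -/
lemma exists_onb (p : E2) (hp : ‖p‖ = 1) :
    ∃ b : OrthonormalBasis (Fin 2) ℝ E2, b 0 = p := by
  set q : E2 := (WithLp.equiv 2 (Fin 2 → ℝ)).symm ![-(p 1), p 0] with hq
  have hq0 : q 0 = -(p 1) := rfl
  have hq1 : q 1 = p 0 := rfl
  have hnorm : ∀ x : E2, ‖x‖^2 = x 0 ^2 + x 1 ^2 := by
    intro x
    rw [EuclideanSpace.norm_eq]
    rw [Real.sq_sqrt (by positivity)]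
    simp [Fin.sum_univ_two, sq_abs]
  have horth : Orthonormal ℝ ![p, q] := by
    rw [orthonormal_iff_ite]
    have hip : ∀ x y : E2, (inner ℝ x y : ℝ) = x 0 * y 0 + x 1 * y 1 := by
      intro x y; simp [PiLp.inner_apply, Fin.sum_univ_two]; ring
    have hp2 : p 0 ^2 + p 1 ^2 = 1 := by
      have := hnorm p; rw [hp] at this; linarith
    have hqn : ‖q‖ = 1 := by
      have := hnorm q; rw [hq0, hq1] at this; nlinarith [norm_nonneg q]
    intro i j
    fin_cases i <;> fin_cases j <;>
      simp [hip, hq0, hq1, hp, hqn, real_inner_self_eq_norm_sq] <;> nlinarith [hp2]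
  have hcard : Fintype.card (Fin 2) = Module.finrank ℝ E2 := by
    simp [finrank_euclideanSpace]
  let basis := basisOfOrthonormalOfCardEqFinrank horth hcard
  have hbasis : ⇑basis = ![p, q] := coe_basisOfOrthonormalOfCardEqFinrank horth hcard
  refine ⟨basis.toOrthonormalBasis (by rwa [hbasis]), ?_⟩
  simp [Module.Basis.coe_toOrthonormalBasis, hbasis]

lemma box_eq (a : Fin 2 → ℝ) :
    {x : E2 | ∀ i, |x i| ≤ a i} =
      (MeasurableEquiv.toLp 2 (Fin 2 → ℝ)).symm ⁻¹' (univ.pi fun i => Icc (-(a i)) (a i)) := by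
  ext x
  simp only [mem_setOf_eq, mem_preimage, Set.mem_pi, mem_univ, forall_true_left, mem_Icc,
    abs_le, MeasurableEquiv.coe_toLp_symm, true_implies]

lemma measurableSet_box (a : Fin 2 → ℝ) : MeasurableSet {x : E2 | ∀ i, |x i| ≤ a i} := by
  rw [box_eq]
  exact (MeasurableEquiv.toLp 2 (Fin 2 → ℝ)).symm.measurable
    (MeasurableSet.univ_pi fun i => measurableSet_Icc)

lemma volume_box (a : Fin 2 → ℝ) :
    volume {x : E2 | ∀ i, |x i| ≤ a i} =
      ENNReal.ofReal (2 * a 0) * ENNReal.ofReal (2 * a 1) := by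
  rw [box_eq, (EuclideanSpace.volume_preserving_symm_measurableEquiv_toLp (Fin 2)).measure_preimage
    (MeasurableSet.univ_pi (fun i => measurableSet_Icc)).nullMeasurableSet,
    volume_pi_pi]
  simp [Real.volume_Icc, Fin.prod_univ_two]
  ring_nf
  rw [ENNReal.ofReal_mul' (by norm_num), ENNReal.ofReal_mul' (by norm_num)]
  simp only [ENNReal.ofReal_ofNat]
  ring

lemma measurableSet_rhombus (L l : ℝ) :
    MeasurableSet {y : E2 | l * |y 0| + L * |y 1| ≤ 1} := by
  have hset : {y : E2 | l * |y 0| + L * |y 1| ≤ 1} =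
      (MeasurableEquiv.toLp 2 (Fin 2 → ℝ)).symm ⁻¹'
        {x : Fin 2 → ℝ | l * |x 0| + L * |x 1| ≤ 1} := by
    ext x
    simp only [mem_setOf_eq, mem_preimage, MeasurableEquiv.coe_toLp_symm]
  rw [hset]
  exact (MeasurableEquiv.toLp 2 (Fin 2 → ℝ)).symm.measurable
    (measurableSet_le
      (by fun_prop) measurable_const)

lemma volume_rhombus (L l : ℝ) (hl : 0 < l) (hL : 0 < L) :
    volume {y : E2 | l * |y 0| + L * |y 1| ≤ 1} = ENNReal.ofReal (2 / (L * l)) := by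
  set M : Matrix (Fin 2) (Fin 2) ℝ := !![1/(2*l), 1/(2*l); 1/(2*L), -(1/(2*L))] with hM
  set D := Matrix.toEuclideanLin M with hD
  have hDapp : ∀ (x : E2) (i : Fin 2), D x i = M.mulVec x i := by
    intro x i; rw [hD, Matrix.toEuclideanLin_apply]
  have himg : ⇑D '' {x : E2 | ∀ i, |x i| ≤ (1 : ℝ)} = {y : E2 | l * |y 0| + L * |y 1| ≤ 1} := by
    ext y
    constructor
    · rintro ⟨x, hx, rfl⟩
      have h0 := (abs_le.1 (hx 0)); have h1 := (abs_le.1 (hx 1))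
      have e0 : D x 0 = (x 0 + x 1) / (2*l) := by
        rw [hDapp]; simp [hM, Matrix.mulVec, dotProduct, Fin.sum_univ_two]; ring
      have e1 : D x 1 = (x 0 - x 1) / (2*L) := by
        rw [hDapp]; simp [hM, Matrix.mulVec, dotProduct, Fin.sum_univ_two]; ring
      simp only [mem_setOf_eq, e0, e1, abs_div, abs_of_pos (by positivity : (0:ℝ) < 2*l),
        abs_of_pos (by positivity : (0:ℝ) < 2*L)]
      have t1 : l * (|x 0 + x 1| / (2*l)) = |x 0 + x 1| / 2 := by field_simp
      have t2 : L * (|x 0 - x 1| / (2*L)) = |x 0 - x 1| / 2 := by field_simp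
      rw [t1, t2]
      rcases abs_cases (x 0 + x 1) with ⟨h, _⟩ | ⟨h, _⟩ <;>
        rcases abs_cases (x 0 - x 1) with ⟨h', _⟩ | ⟨h', _⟩ <;>
        rw [h, h'] <;> linarith
    · intro hy
      simp only [mem_setOf_eq] at hy
      refine ⟨(WithLp.equiv 2 (Fin 2 → ℝ)).symm ![l * y 0 + L * y 1, l * y 0 - L * y 1], ?_, ?_⟩
      · intro i
        have hb0 : l * |y 0| = |l * y 0| := by rw [abs_mul, abs_of_pos hl]
        have hb1 : L * |y 1| = |L * y 1| := by rw [abs_mul, abs_of_pos hL]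
        fin_cases i
        · show |l * y 0 + L * y 1| ≤ 1
          calc |l * y 0 + L * y 1| ≤ |l * y 0| + |L * y 1| := abs_add_le _ _
            _ ≤ 1 := by rw [← hb0, ← hb1]; exact hy
        · show |l * y 0 - L * y 1| ≤ 1
          calc |l * y 0 - L * y 1| ≤ |l * y 0| + |L * y 1| := abs_sub _ _
            _ ≤ 1 := by rw [← hb0, ← hb1]; exact hy
      · ext i
        rw [hDapp]
        fin_cases i <;>
          · simp [hM, Matrix.mulVec, dotProduct, Fin.sum_univ_two]
            field_simp
            ring
  have hdetM : M.det = -(1 / (2 * (L * l))) := by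
    rw [hM, Matrix.det_fin_two_of]; field_simp; ring
  have hdet : |LinearMap.det D| = 1 / (2 * (L * l)) := by
    rw [hD, Matrix.toEuclideanLin_eq_toLin, LinearMap.det_toLin, hdetM, abs_neg,
      abs_of_pos (by positivity)]
  rw [← himg, Measure.addHaar_image_linearMap, hdet, volume_box fun _ => (1:ℝ)]
  rw [← ENNReal.ofReal_mul (by positivity), ← ENNReal.ofReal_mul (by positivity)]
  norm_num
  congr 1
  field_simp
  ring

/-- **Inequality (2.5) in Lemma 2.6 (John ellipse estimate).** For a norm `N` on `ℝ²`
with maximal stretch `L` and minimal stretch `l` on the Euclidean unit circle, and unit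
ball `B = {N ≤ 1}`, one has `(1/2)·L·l ≤ π/|B| ≤ 2·L·l`; equivalently
`|B|·L·l ≤ 2π` and `π ≤ 2·|B|·L·l`. -/
theorem john_ellipse_area_bounds
    (N : E2 → ℝ)
    (hNhom : ∀ (a : ℝ) (v : E2), N (a • v) = |a| * N v)
    (hNadd : ∀ v w : E2, N (v + w) ≤ N v + N w)
    (hNzero : ∀ v : E2, N v = 0 ↔ v = 0)
    (L l : ℝ)
    (hL : IsGreatest (N '' {v : E2 | ‖v‖ = 1}) L)
    (hl : IsLeast (N '' {v : E2 | ‖v‖ = 1}) l)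
    (B : Set E2) (hB : B = {v : E2 | N v ≤ 1}) :
    (1 / 2) * (L * l) ≤ π / (volume B).toReal ∧
    π / (volume B).toReal ≤ 2 * (L * l) ∧
    (volume B).toReal * (L * l) ≤ 2 * π ∧
    π ≤ 2 * ((volume B).toReal * (L * l)) := by
  -- basic facts about N
  obtain ⟨u, hu1, huL⟩ := hL.1
  obtain ⟨w, hw1, hwl⟩ := hl.1
  simp only [mem_setOf_eq] at hu1 hw1
  have hN0 : N 0 = 0 := by
    have := hNhom 0 0; simpa using this
  have hNneg : ∀ v : E2, N (-v) = N v := by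
    intro v; have := hNhom (-1) v; simpa using this
  have hl0 : 0 < l := by
    rcases lt_trichotomy l 0 with h | h | h
    · exfalso
      have hNnn : 0 ≤ N w := by
        have h2 := hNadd w (-w)
        rw [hNneg] at h2
        simp [hN0] at h2
        linarith
      rw [hwl] at hNnn; linarith
    · exfalso
      have : w = 0 := (hNzero w).1 (by rw [hwl, h])
      rw [this] at hw1; simp at hw1
    · exact h
  have hlL : l ≤ L := by
    have := hL.2 ⟨w, by simpa [mem_setOf_eq] using hw1, hwl⟩
    linarith
  have hL0 : 0 < L := lt_of_lt_of_le hl0 hlL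
  have hNle : ∀ v : E2, N v ≤ L * ‖v‖ := by
    intro v
    rcases eq_or_ne v 0 with rfl | hv
    · simp [hN0]
    · have hnv : (0:ℝ) < ‖v‖ := norm_pos_iff.2 hv
      have hunit : ‖(‖v‖⁻¹ : ℝ) • v‖ = 1 := norm_smul_inv_norm hv
      have := hL.2 ⟨(‖v‖⁻¹ : ℝ) • v, hunit, rfl⟩
      have h2 : N ((‖v‖⁻¹ : ℝ) • v) = ‖v‖⁻¹ * N v := by
        rw [hNhom, abs_of_pos (by positivity)]
      rw [h2] at this
      calc N v = ‖v‖ * (‖v‖⁻¹ * N v) := by field_simp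
        _ ≤ ‖v‖ * L := by
            apply mul_le_mul_of_nonneg_left this hnv.le
        _ = L * ‖v‖ := by ring
  have hNge : ∀ v : E2, l * ‖v‖ ≤ N v := by
    intro v
    rcases eq_or_ne v 0 with rfl | hv
    · simp [hN0]
    · have hnv : (0:ℝ) < ‖v‖ := norm_pos_iff.2 hv
      have hunit : ‖(‖v‖⁻¹ : ℝ) • v‖ = 1 := norm_smul_inv_norm hv
      have := hl.2 ⟨(‖v‖⁻¹ : ℝ) • v, hunit, rfl⟩
      have h2 : N ((‖v‖⁻¹ : ℝ) • v) = ‖v‖⁻¹ * N v := by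
        rw [hNhom, abs_of_pos (by positivity)]
      rw [h2] at this
      calc l * ‖v‖ ≤ (‖v‖⁻¹ * N v) * ‖v‖ := by
            apply mul_le_mul_of_nonneg_right this hnv.le
        _ = N v := by field_simp
  -- continuity of N
  have hNcont : Continuous N := by
    have : LipschitzWith (Real.toNNReal L) N := by
      apply LipschitzWith.of_dist_le_mul
      intro x y
      rw [Real.dist_eq, dist_eq_norm, Real.coe_toNNReal _ hL0.le]
      rw [abs_sub_le_iff]
      constructor
      · have h1 := hNadd y (x - y)
        simp only [add_sub_cancel] at h1
        have := hNle (x - y)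
        linarith
      · have h1 := hNadd x (y - x)
        simp only [add_sub_cancel] at h1
        have h2 := hNle (y - x)
        have h3 : N (y - x) = N (x - y) := by rw [← hNneg (x - y), neg_sub]
        have h4 : ‖y - x‖ = ‖x - y‖ := by rw [← norm_neg, neg_sub]
        rw [h3, h4] at h2
        linarith
    exact this.continuous
  -- Hahn-Banach: supporting functional at u/L
  set intB : Set E2 := {v : E2 | N v < 1} with hintB
  have hopen : IsOpen intB := isOpen_lt hNcont continuous_const
  have hconv : Convex ℝ intB := by
    intro x hx y hy a b ha hb hab
    simp only [hintB, mem_setOf_eq] at hx hy ⊢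
    calc N (a • x + b • y) ≤ N (a • x) + N (b • y) := hNadd _ _
      _ = a * N x + b * N y := by rw [hNhom, hNhom, abs_of_nonneg ha, abs_of_nonneg hb]
      _ < 1 := by
          rcases eq_or_lt_of_le ha with rfl | ha'
          · simp only [zero_mul, zero_add]
            have : b = 1 := by linarith
            rw [this]; simpa using hy
          · have h1 : a * N x < a * 1 := by
              apply mul_lt_mul_of_pos_left hx ha'
            have h2 : b * N y ≤ b * 1 := by
              apply mul_le_mul_of_nonneg_left hy.le hb
            linarith
  have hpoint : (L⁻¹ : ℝ) • u ∉ intB := by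
    simp only [hintB, mem_setOf_eq, not_lt, hNhom, abs_of_pos (by positivity : (0:ℝ) < L⁻¹),
      huL]
    rw [inv_mul_cancel₀ hL0.ne']
  obtain ⟨f, hf⟩ := geometric_hahn_banach_open_point hconv hopen hpoint
  set c : ℝ := f ((L⁻¹ : ℝ) • u) with hc
  have hc0 : 0 < c := by
    have h0 : (0 : E2) ∈ intB := by simp [hintB, hN0]
    have := hf 0 h0
    simpa using this
  have hfB : ∀ v ∈ B, f v ≤ c := by
    intro v hv
    rw [hB, mem_setOf_eq] at hv
    by_contra h
    push_neg at h
    have hfv : 0 < f v := hc0.trans h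
    have ht1 : c / f v < 1 := (div_lt_one hfv).2 h
    have ht0 : 0 < c / f v := by positivity
    have hmem : (c / f v) • v ∈ intB := by
      simp only [hintB, mem_setOf_eq, hNhom, abs_of_pos ht0]
      calc (c / f v) * N v ≤ (c / f v) * 1 := by
            apply mul_le_mul_of_nonneg_left hv ht0.le
        _ < 1 := by rwa [mul_one]
    have hlt := hf _ hmem
    rw [f.map_smul, smul_eq_mul, div_mul_cancel₀ _ hfv.ne'] at hlt
    exact lt_irrefl c hlt
  have habsf : ∀ v ∈ B, |f v| ≤ c := by
    intro v hv
    have hvneg : -v ∈ B := by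
      rw [hB, mem_setOf_eq, hNneg]
      rw [hB, mem_setOf_eq] at hv; exact hv
    rw [abs_le]
    refine ⟨?_, hfB v hv⟩
    have := hfB _ hvneg
    rw [map_neg] at this
    linarith
  have hnormf : c * L ≤ ‖f‖ := by
    have h1 : c ≤ ‖f‖ * ‖(L⁻¹ : ℝ) • u‖ := by
      rw [hc]
      calc f ((L⁻¹ : ℝ) • u) ≤ |f ((L⁻¹ : ℝ) • u)| := le_abs_self _
        _ = ‖f ((L⁻¹ : ℝ) • u)‖ := rfl
        _ ≤ ‖f‖ * ‖(L⁻¹ : ℝ) • u‖ := f.le_opNorm _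
    rw [norm_smul, hu1, mul_one, Real.norm_eq_abs, abs_of_pos (by positivity : (0:ℝ) < L⁻¹)]
      at h1
    calc c * L ≤ (‖f‖ * L⁻¹) * L := by
          apply mul_le_mul_of_nonneg_right h1 hL0.le
      _ = ‖f‖ := by field_simp
  -- Riesz representation
  set y : E2 := (InnerProductSpace.toDual ℝ E2).symm f with hy
  have hyf : ∀ v : E2, (inner ℝ y v : ℝ) = f v := by
    intro v; rw [hy]; exact InnerProductSpace.toDual_symm_apply
  have hyn : ‖y‖ = ‖f‖ := by rw [hy]; exact LinearIsometryEquiv.norm_map _ f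
  have hy0 : y ≠ 0 := by
    intro h
    rw [h] at hyn
    simp only [norm_zero] at hyn
    nlinarith [hnormf]
  have hyn0 : (0:ℝ) < ‖y‖ := norm_pos_iff.2 hy0
  set p : E2 := (‖y‖⁻¹ : ℝ) • y with hp
  have hp1 : ‖p‖ = 1 := norm_smul_inv_norm hy0
  have hpB : ∀ v ∈ B, |(inner ℝ p v : ℝ)| ≤ 1 / L := by
    intro v hv
    rw [hp, real_inner_smul_left, hyf, abs_mul, abs_of_pos (by positivity : (0:ℝ) < ‖y‖⁻¹)]
    have h1 : |f v| ≤ c := habsf v hv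
    have h2 : ‖y‖⁻¹ * |f v| ≤ ‖y‖⁻¹ * c := by
      apply mul_le_mul_of_nonneg_left h1 (by positivity)
    refine h2.trans ?_
    rw [inv_mul_eq_div, div_le_div_iff₀ hyn0 hL0]
    rw [hyn]
    linarith [hnormf]
  -- membership bound on Euclidean norm
  have hvnorm : ∀ v ∈ B, ‖v‖ ≤ 1 / l := by
    intro v hv
    rw [hB, mem_setOf_eq] at hv
    have := hNge v
    rw [le_div_iff₀ hl0]
    linarith
  -- Upper bound for the volume: B fits in a box
  obtain ⟨b, hb0⟩ := exists_onb p hp1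
  have hsubBox : B ⊆ ⇑b.repr ⁻¹' {x : E2 | ∀ i, |x i| ≤ ![1/L, 1/l] i} := by
    intro v hv
    simp only [mem_preimage, mem_setOf_eq]
    intro i
    rw [b.repr_apply_apply]
    fin_cases i
    · simpa [hb0] using hpB v hv
    · simp only [Matrix.cons_val_one, Matrix.head_cons]
      calc |(inner ℝ (b 1) v : ℝ)| ≤ ‖b 1‖ * ‖v‖ := abs_real_inner_le_norm _ _
        _ = ‖v‖ := by rw [b.orthonormal.1 1, one_mul]
        _ ≤ 1 / l := hvnorm v hv
  have hvolup : volume B ≤ ENNReal.ofReal (4 / (L * l)) := by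
    calc volume B ≤ volume (⇑b.repr ⁻¹' {x : E2 | ∀ i, |x i| ≤ ![1/L, 1/l] i}) :=
          measure_mono hsubBox
      _ = volume {x : E2 | ∀ i, |x i| ≤ ![1/L, 1/l] i} :=
          b.measurePreserving_repr.measure_preimage
            (measurableSet_box ![1/L, 1/l]).nullMeasurableSet
      _ = ENNReal.ofReal (2 * (1/L)) * ENNReal.ofReal (2 * (1/l)) := by
          rw [volume_box]; norm_num
      _ = ENNReal.ofReal (4 / (L * l)) := by
          rw [← ENNReal.ofReal_mul (by positivity)]
          congr 1
          field_simp
          ring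
  -- Lower bound for the volume: B contains a rhombus
  obtain ⟨b', hb'0⟩ := exists_onb w hw1
  have hsubRh : ⇑b'.repr ⁻¹' {x : E2 | l * |x 0| + L * |x 1| ≤ 1} ⊆ B := by
    intro v hv
    simp only [mem_preimage, mem_setOf_eq] at hv
    rw [hB, mem_setOf_eq]
    have hvsum : b'.repr v 0 • b' 0 + b'.repr v 1 • b' 1 = v := by
      have := b'.sum_repr v
      rwa [Fin.sum_univ_two] at this
    calc N v = N (b'.repr v 0 • b' 0 + b'.repr v 1 • b' 1) := by rw [hvsum]
      _ ≤ N (b'.repr v 0 • b' 0) + N (b'.repr v 1 • b' 1) := hNadd _ _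
      _ = |b'.repr v 0| * N (b' 0) + |b'.repr v 1| * N (b' 1) := by rw [hNhom, hNhom]
      _ ≤ |b'.repr v 0| * l + |b'.repr v 1| * L := by
          have h1 : N (b' 0) = l := by rw [hb'0, hwl]
          have h2 : N (b' 1) ≤ L := by
            have := hNle (b' 1)
            rwa [b'.orthonormal.1 1, mul_one] at this
          have := mul_le_mul_of_nonneg_left h2 (abs_nonneg (b'.repr v 1))
          rw [h1]
          linarith
      _ ≤ 1 := by
          rw [show |b'.repr v 0| * l = l * |b'.repr v 0| by ring,
            show |b'.repr v 1| * L = L * |b'.repr v 1| by ring]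
          exact hv
  have hvollow : ENNReal.ofReal (2 / (L * l)) ≤ volume B := by
    calc ENNReal.ofReal (2 / (L * l)) = volume {x : E2 | l * |x 0| + L * |x 1| ≤ 1} :=
          (volume_rhombus L l hl0 hL0).symm
      _ = volume (⇑b'.repr ⁻¹' {x : E2 | l * |x 0| + L * |x 1| ≤ 1}) :=
          (b'.measurePreserving_repr.measure_preimage
            (measurableSet_rhombus L l).nullMeasurableSet).symm
      _ ≤ volume B := measure_mono hsubRh
  -- Arithmetic conclusion
  have hfin : volume B ≠ ⊤ := by
    intro h
    rw [h] at hvolup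
    exact ENNReal.ofReal_ne_top (top_le_iff.1 hvolup)
  set V : ℝ := (volume B).toReal with hV
  have hVle : V ≤ 4 / (L * l) := ENNReal.toReal_le_of_le_ofReal (by positivity) hvolup
  have hVge : 2 / (L * l) ≤ V := (ENNReal.ofReal_le_iff_le_toReal hfin).1 hvollow
  have hV0 : 0 < V := lt_of_lt_of_le (by positivity) hVge
  have hprod_le : V * (L * l) ≤ 4 := by
    rw [← le_div_iff₀ (by positivity : (0:ℝ) < L * l)]
    exact hVle
  have hprod_ge : 2 ≤ V * (L * l) := by
    rw [← div_le_iff₀ (by positivity : (0:ℝ) < L * l)]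
    exact hVge
  have hpi1 : π ≤ 4 := Real.pi_le_four
  have hpi2 : 3 < π := Real.pi_gt_three
  refine ⟨?_, ?_, ?_, ?_⟩
  · rw [le_div_iff₀ hV0, show 1 / 2 * (L * l) * V = V * (L * l) / 2 by ring]
    linarith only [hprod_le, hpi2]
  · rw [div_le_iff₀ hV0, show 2 * (L * l) * V = 2 * (V * (L * l)) by ring]
    linarith only [hprod_ge, hpi1]
  · linarith only [hprod_le, hpi2]
  · linarith only [hprod_ge, hpi1]
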